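/- arXiv:0902.2237 — 4 statements merged into one kernel-verified Lean document; each statement's English description precedes it below -/
import Mathlib

section
/- Over a ring R, every strongly Gorenstein projective R-module is projective if and only if Ext^1_R(M,M) = 0 for every strongly Gorenstein projective R-module M. -/
open CategoryTheory

noncomputable instance (R : Type) [CommRing R] : HasExt.{1} (ModuleCat.{0} R) :=
  have : HasDerivedCategory.{1} (ModuleCat.{0} R) := HasDerivedCategory.standard _
  hasExt_of_hasDerivedCategory _

/-- `Ext^n_R(M, N) = 0`. -/
def ExtVanish (R : Type) [CommRing R] (M N : Type) [AddCommGroup M] [Module R M]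
    [AddCommGroup N] [Module R N] (n : ℕ) : Prop :=
  Subsingleton (Abelian.Ext (ModuleCat.of R M) (ModuleCat.of R N) n)

/-- Strongly Gorenstein projective (short exact sequence characterization):
there is an exact sequence `0 → M → P → M → 0` with `P` projective, and
`Ext^1_R(M, Q) = 0` for every projective `Q`. -/
def IsSGP (R : Type) [CommRing R] (M : Type) [AddCommGroup M] [Module R M] : Prop :=
  (∃ (P : ModuleCat.{0} R) (i : M →ₗ[R] P) (p : P →ₗ[R] M),
      Module.Projective R P ∧ Function.Injective i ∧ Function.Surjective p ∧
      LinearMap.range i = LinearMap.ker p) ∧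
  ∀ Q : ModuleCat.{0} R, Module.Projective R Q → ExtVanish R M Q 1

/-- Strongly Gorenstein projective (complete resolution definition): there is an exact
complex `⋯ → P →^f P →^f P → ⋯` of projective modules which stays exact after applying
`Hom(-, Q)` for every projective `Q`, with `M ≅ Im f`. -/
def IsSGPComplete (R : Type) [CommRing R] (M : Type) [AddCommGroup M] [Module R M] : Prop :=
  ∃ (P : ModuleCat.{0} R) (f : P →ₗ[R] P),
    Module.Projective R P ∧ LinearMap.range f = LinearMap.ker f ∧
    (∀ Q : ModuleCat.{0} R, Module.Projective R Q →
      LinearMap.range (LinearMap.lcomp R Q f) = LinearMap.ker (LinearMap.lcomp R Q f)) ∧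
    Nonempty (M ≃ₗ[R] LinearMap.range f)

/-- Gorenstein projective: there is a complete projective resolution, i.e. an exact complex
`⋯ → P_i →^{d_i} P_{i+1} → ⋯` of projective modules which stays exact after applying
`Hom(-, Q)` for every projective `Q`, with `M` isomorphic to one of the images. -/
def IsGP (R : Type) [CommRing R] (M : Type) [AddCommGroup M] [Module R M] : Prop :=
  ∃ (P : ℤ → ModuleCat.{0} R) (d : ∀ i, P i →ₗ[R] P (i + 1)),
    (∀ i, Module.Projective R (P i)) ∧
    (∀ i, LinearMap.range (d i) = LinearMap.ker (d (i + 1))) ∧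
    (∀ (Q : ModuleCat.{0} R), Module.Projective R Q → ∀ i,
      LinearMap.range (LinearMap.lcomp R Q (d (i + 1))) =
        LinearMap.ker (LinearMap.lcomp R Q (d i))) ∧
    ∃ i, Nonempty (M ≃ₗ[R] LinearMap.range (d i))

/-- `ResLen R C n M` : `M` admits a resolution `0 → G_n → ⋯ → G_0 → M → 0`
where each `G_j` satisfies the predicate `C`. -/
def ResLen (R : Type) [CommRing R] (C : ModuleCat.{0} R → Prop) :
    ℕ → ModuleCat.{0} R → Prop
  | 0, M => C M
  | n + 1, M => ∃ (G : ModuleCat.{0} R) (g : G →ₗ[R] M), C G ∧ Function.Surjective g ∧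
      ResLen R C n (ModuleCat.of R (LinearMap.ker g))

/-- The projective dimension of `M`, as an element of `ℕ∞`. -/
noncomputable def pdim (R : Type) [CommRing R] (M : Type) [AddCommGroup M] [Module R M] : ℕ∞ :=
  sInf {c : ℕ∞ | ∃ n : ℕ, c = n ∧
    ResLen R (fun P => Module.Projective R P) n (ModuleCat.of R M)}

/-- The Gorenstein projective dimension of `M`, as an element of `ℕ∞`. -/
noncomputable def Gpdim (R : Type) [CommRing R] (M : Type) [AddCommGroup M] [Module R M] : ℕ∞ :=
  sInf {c : ℕ∞ | ∃ n : ℕ, c = n ∧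
    ResLen R (fun G => IsGP R G) n (ModuleCat.of R M)}

/-- `M` admits a finite `n`-presentation: an exact sequence
`F_n → ⋯ → F_0 → M → 0` with each `F_i` finitely generated free. -/
def NPres (R : Type) [CommRing R] : ℕ → ModuleCat.{0} R → Prop
  | 0, M => ∃ (F : ModuleCat.{0} R) (g : F →ₗ[R] M),
      Module.Free R F ∧ Module.Finite R F ∧ Function.Surjective g
  | n + 1, M => ∃ (F : ModuleCat.{0} R) (g : F →ₗ[R] M),
      Module.Free R F ∧ Module.Finite R F ∧ Function.Surjective g ∧
      NPres R n (ModuleCat.of R (LinearMap.ker g))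

section myaux
open CategoryTheory Abelian DerivedCategory

universe w' w v u
variable {C : Type u} [Category.{v} C] [Abelian C] [HasDerivedCategory.{w'} C]

noncomputable def myIota : singleFunctor C 0 ⋙ DerivedCategory.homologyFunctor C 0 ≅ 𝟭 C :=
  Functor.isoWhiskerRight ((SingleFunctors.evaluation _ _ (0:ℤ)).mapIso
    (singleFunctorsPostcompQIso C)) (DerivedCategory.homologyFunctor C 0) ≪≫
  Functor.associator _ _ _ ≪≫
  Functor.isoWhiskerLeft _ (homologyFunctorFactors C 0) ≪≫
  HomologicalComplex.homologyFunctorSingleIso C (ComplexShape.up ℤ) 0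

namespace CategoryTheory.Abelian.Ext

variable [HasExt.{w} C]

/-- Realization of a degree-0 Ext element as a morphism. -/
noncomputable def real {X Y : C} (α : Ext X Y 0) : X ⟶ Y :=
  (myIota (C := C)).inv.app X ≫
    (DerivedCategory.homologyFunctor C 0).map
      ((ShiftedHom.homEquiv (C := DerivedCategory C) (M := ℤ) ((0:ℕ):ℤ) (by simp)).symm α.hom) ≫
    (myIota (C := C)).hom.app Y

lemma real_mk₀ {X Y : C} (f : X ⟶ Y) : real (mk₀ f) = f := by
  have h : ((ShiftedHom.homEquiv (C := DerivedCategory C) (M := ℤ) ((0:ℕ):ℤ)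
      (by simp)).symm (Ext.mk₀ f).hom) = (singleFunctor C 0).map f := by
    rw [Ext.mk₀_hom]
    exact (ShiftedHom.homEquiv _ _).left_inv _
  rw [real, h]
  have := (myIota (C := C)).hom.naturality f
  dsimp at this ⊢
  rw [this, Iso.inv_hom_id_app_assoc]

lemma real_comp {X Y Z : C} (α : Ext X Y 0) (β : Ext Y Z 0) (h : (0:ℕ) + 0 = 0) :
    real (α.comp β h) = real α ≫ real β := by
  have h0 : ((0:ℕ):ℤ) = 0 := by simp
  have hα : α.hom = ShiftedHom.mk₀ _ h0 ((ShiftedHom.homEquiv _ h0).symm α.hom) :=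
    ((ShiftedHom.homEquiv _ h0).right_inv α.hom).symm
  have hβ : β.hom = ShiftedHom.mk₀ _ h0 ((ShiftedHom.homEquiv _ h0).symm β.hom) :=
    ((ShiftedHom.homEquiv _ h0).right_inv β.hom).symm
  have hcomp : (α.comp β h).hom = ShiftedHom.mk₀ _ h0
      ((ShiftedHom.homEquiv _ h0).symm α.hom ≫ (ShiftedHom.homEquiv _ h0).symm β.hom) := by
    rw [Ext.comp_hom, hα, hβ, ShiftedHom.mk₀_comp_mk₀]
    simp only [← ShiftedHom.homEquiv_apply, Equiv.symm_apply_apply]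
  have h2 : (ShiftedHom.homEquiv _ h0).symm (α.comp β h).hom =
      (ShiftedHom.homEquiv _ h0).symm α.hom ≫ (ShiftedHom.homEquiv _ h0).symm β.hom := by
    rw [hcomp]; exact (ShiftedHom.homEquiv _ h0).left_inv _
  simp only [real, h2, Functor.map_comp, Category.assoc, Iso.hom_inv_id_app_assoc]

end CategoryTheory.Abelian.Ext

open Abelian in
lemma my_exists_section {C : Type u} [Category.{v} C] [Abelian C] [HasExt.{w} C]
    (S : ShortComplex C) (hS : S.ShortExact) (h : Subsingleton (Ext S.X₃ S.X₁ 1)) :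
    ∃ s : S.X₃ ⟶ S.X₂, s ≫ S.g = 𝟙 S.X₃ := by
  letI := HasDerivedCategory.standard C
  obtain ⟨x₂, hx₂⟩ := Ext.covariant_sequence_exact₃ S.X₃ hS (Ext.mk₀ (𝟙 S.X₃))
    (n₁ := 1) rfl (Subsingleton.elim _ _)
  refine ⟨x₂.real, ?_⟩
  rw [← Ext.real_mk₀ S.g, ← Ext.real_comp x₂ (Ext.mk₀ S.g) (by simp), hx₂, Ext.real_mk₀]

section stmt2aux

variable (R : Type) [CommRing R]

lemma sgp_proj (M : Type) [AddCommGroup M] [Module R M]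
    (P : ModuleCat.{0} R) (i : M →ₗ[R] P) (p : P →ₗ[R] M)
    (hP : Module.Projective R P) (hi : Function.Injective i) (hp : Function.Surjective p)
    (hk : LinearMap.range i = LinearMap.ker p)
    (hvan : Subsingleton (Abelian.Ext (ModuleCat.of R M) (ModuleCat.of R M) 1)) :
    Module.Projective R M := by
  let S : ShortComplex (ModuleCat.{0} R) :=
    ShortComplex.mk (X₁ := ModuleCat.of R M) (X₂ := P) (X₃ := ModuleCat.of R M) (ModuleCat.ofHom i) (ModuleCat.ofHom p) (by
      ext x
      have : i x ∈ LinearMap.ker p := hk ▸ LinearMap.mem_range_self i x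
      exact this)
  have hSE : S.ShortExact := by
    haveI : Mono S.f := (ModuleCat.mono_iff_injective _).mpr hi
    haveI : Epi S.g := (ModuleCat.epi_iff_surjective _).mpr hp
    exact ⟨(ShortComplex.moduleCat_exact_iff_range_eq_ker _).mpr hk⟩
  obtain ⟨s, hs⟩ := my_exists_section S hSE hvan
  exact Module.Projective.of_split (R := R) (M := P) s.hom p
    (by ext x; exact congr_arg (fun f => ModuleCat.Hom.hom f x) hs)

end stmt2aux

end myaux

/-- every strongly Gorenstein projective `R`-module is projective iff
`Ext^1_R(M, M) = 0` for every strongly Gorenstein projective `R`-module `M`. -/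
theorem stmt2 (R : Type) [CommRing R] :
    (∀ (M : Type) [AddCommGroup M] [Module R M], IsSGP R M → Module.Projective R M) ↔
    (∀ (M : Type) [AddCommGroup M] [Module R M], IsSGP R M → ExtVanish R M M 1) := by
  constructor
  · intro hyp M _ _ hM
    exact hM.2 (ModuleCat.of R M) (hyp M hM)
  · intro hyp M _ _ hM
    have hvan := hyp M hM
    obtain ⟨⟨P, i, p, hP, hi, hp, hk⟩, -⟩ := hM
    exact sgp_proj R M P i p hP hi hp hk hvan
end

section
/- If M is a strongly Gorenstein projective R-module and Ext^1_R(M,M) = 0, then M is projective. -/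
open CategoryTheory

/-- a strongly Gorenstein projective module `M` with `Ext^1_R(M,M) = 0`
is projective. -/
theorem stmt3 (R : Type) [CommRing R] (M : Type) [AddCommGroup M] [Module R M]
    (h1 : IsSGP R M) (h2 : ExtVanish R M M 1) : Module.Projective R M := by
  classical
  obtain ⟨⟨P, i, p, hP, hi, hp, hker⟩, -⟩ := h1
  let S : ShortComplex (ModuleCat.{0} R) :=
    ShortComplex.mk (X₁ := ModuleCat.of R M) (X₂ := P) (X₃ := ModuleCat.of R M)
      (ModuleCat.ofHom i : ModuleCat.of R M ⟶ P) (ModuleCat.ofHom p : P ⟶ ModuleCat.of R M) (by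
        ext x
        have hx : i x ∈ LinearMap.ker p := hker ▸ LinearMap.mem_range_self i x
        exact hx)
  have hS : S.ShortExact :=
    { exact := by
        rw [ShortComplex.moduleCat_exact_iff_range_eq_ker]
        exact hker
      mono_f := (ModuleCat.mono_iff_injective _).2 hi
      epi_g := (ModuleCat.epi_iff_surjective _).2 hp }
  letI : Subsingleton (Abelian.Ext (ModuleCat.of R M) (ModuleCat.of R M) 1) := h2
  have hext : hS.extClass = 0 := Subsingleton.elim _ _
  letI : HasDerivedCategory.{1} (ModuleCat.{0} R) := HasDerivedCategory.standard _
  have hδ : hS.singleδ = 0 := by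
    rw [← hS.extClass_hom, hext, Abelian.Ext.zero_hom]
  have hmor₃ : hS.singleTriangle.mor₃ = 0 := hδ
  obtain ⟨σ, hσ⟩ := Pretriangulated.Triangle.coyoneda_exact₃ _
    hS.singleTriangle_distinguished (𝟙 _) (by rw [hmor₃, Limits.comp_zero])
  -- σ : single M ⟶ single P with 𝟙 = σ ≫ mor₂
  let C := ModuleCat.{0} R
  let H := DerivedCategory.homologyFunctor C 0
  let e : DerivedCategory.singleFunctor C 0 ⋙ H ≅ 𝟭 C :=
    Functor.isoWhiskerRight ((SingleFunctors.evaluation _ _ 0).mapIso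
      (DerivedCategory.singleFunctorsPostcompQIso C)) H ≪≫ Functor.associator _ _ _ ≪≫
      Functor.isoWhiskerLeft (CochainComplex.singleFunctor C 0)
        (DerivedCategory.homologyFunctorFactors C 0) ≪≫
      HomologicalComplex.homologyFunctorSingleIso C (ComplexShape.up ℤ) 0
  let t : ModuleCat.of R M ⟶ P :=
    e.inv.app (ModuleCat.of R M) ≫ H.map σ ≫ e.hom.app P
  have h5 : t ≫ S.g = 𝟙 (ModuleCat.of R M) := by
    have hnat := e.hom.naturality S.g
    dsimp only [Functor.id_map] at hnat
    calc t ≫ S.g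
        = e.inv.app _ ≫ H.map σ ≫ ((DerivedCategory.singleFunctor C 0 ⋙ H).map S.g ≫
            e.hom.app (ModuleCat.of R M)) := by
          dsimp only [t]
          erw [hnat]
          erw [Category.assoc]
      _ = e.inv.app _ ≫ H.map (σ ≫ (DerivedCategory.singleFunctor C 0).map S.g) ≫
            e.hom.app (ModuleCat.of R M) := by
          dsimp only [Functor.comp_map]
          erw [H.map_comp, Category.assoc]
      _ = 𝟙 _ := by
          erw [show σ ≫ (DerivedCategory.singleFunctor C 0).map S.g = 𝟙 _ from hσ.symm]
          erw [H.map_id, Category.id_comp, e.inv_hom_id_app]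
  exact Module.Projective.of_split (M := P) t.hom p (congrArg ModuleCat.Hom.hom h5)
end

section
/- Every finitely generated strongly Gorenstein projective R-module is projective if and only if Ext^1_R(M,M) = 0 for every finitely generated strongly Gorenstein projective R-module M. -/
open CategoryTheory

section Ext0Lift

open DerivedCategory

universe w v u

variable {C : Type u} [Category.{v} C] [Abelian C] [HasExt.{w} C]

/-- If `x : Ext X Y 0` satisfies `x ∘ g = mk₀ h`, then there is an honest morphism
`s : X ⟶ Y` with `s ≫ g = h`. -/
lemma ext0_lift {X Y Z : C} (x : Abelian.Ext X Y 0) (g : Y ⟶ Z) (h : X ⟶ Z)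
    (hx : x.comp (Abelian.Ext.mk₀ g) (add_zero 0) = Abelian.Ext.mk₀ h) :
    ∃ s : X ⟶ Y, s ≫ g = h := by
  letI := HasDerivedCategory.standard C
  let H := DerivedCategory.homologyFunctor C 0
  let e1 : DerivedCategory.singleFunctor C 0 ≅ CochainComplex.singleFunctor C 0 ⋙ Q :=
    (SingleFunctors.evaluation _ _ 0).mapIso (singleFunctorsPostcompQIso C)
  let ε : DerivedCategory.singleFunctor C 0 ⋙ H ≅ 𝟭 C :=
    Functor.isoWhiskerRight e1 H ≪≫ Functor.associator _ _ _ ≪≫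
      Functor.isoWhiskerLeft _ (homologyFunctorFactors C 0) ≪≫
      HomologicalComplex.homologyFunctorSingleIso C (ComplexShape.up ℤ) 0
  have h0 : ((0 : ℕ) : ℤ) = 0 := by simp
  let ζ := (shiftFunctorZero' (DerivedCategory C) ((0 : ℕ) : ℤ) h0).hom
  let t : ∀ {A B : C}, Abelian.Ext A B 0 → (A ⟶ B) := fun {A B} y =>
    ε.inv.app A ≫ H.map (y.hom ≫ ζ.app _) ≫ ε.hom.app B
  have ht₀ : ∀ {A B : C} (f : A ⟶ B), t (Abelian.Ext.mk₀ f) = f := by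
    intro A B f
    dsimp only [t]
    rw [Abelian.Ext.mk₀_hom]
    have : (ShiftedHom.mk₀ ((0 : ℕ) : ℤ) (by simp)
        ((DerivedCategory.singleFunctor C 0).map f)) ≫ ζ.app _ =
        (DerivedCategory.singleFunctor C 0).map f := by
      simp [ShiftedHom.mk₀, ζ]
    rw [this,
      show H.map ((DerivedCategory.singleFunctor C 0).map f) =
        (DerivedCategory.singleFunctor C 0 ⋙ H).map f from rfl,
      NatTrans.naturality]
    simp
  have ht₁ : ∀ {A B B' : C} (y : Abelian.Ext A B 0) (g' : B ⟶ B'),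
      t (y.comp (Abelian.Ext.mk₀ g') (add_zero 0)) = t y ≫ g' := by
    intro A B B' y g'
    dsimp only [t]
    rw [Abelian.Ext.comp_hom, Abelian.Ext.mk₀_hom, ShiftedHom.comp_mk₀,
      Category.assoc, NatTrans.naturality, Functor.id_map, Functor.map_comp,
      Functor.map_comp,
      show H.map ((DerivedCategory.singleFunctor C 0).map g') =
        (DerivedCategory.singleFunctor C 0 ⋙ H).map g' from rfl]
    simp only [Category.assoc]
    rw [NatTrans.naturality]
    simp [Functor.map_comp]
  refine ⟨t x, ?_⟩
  rw [← ht₁ x g, hx, ht₀]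

end Ext0Lift

/-- every finitely generated strongly Gorenstein projective `R`-module is
projective iff `Ext^1_R(M,M) = 0` for every finitely generated strongly Gorenstein
projective `R`-module `M`. -/
theorem stmt7 (R : Type) [CommRing R] :
    (∀ (M : Type) [AddCommGroup M] [Module R M],
        Module.Finite R M → IsSGP R M → Module.Projective R M) ↔
    (∀ (M : Type) [AddCommGroup M] [Module R M],
        Module.Finite R M → IsSGP R M → ExtVanish R M M 1) := by
  constructor
  · intro h M _ _ hfin hsgp
    exact hsgp.2 (ModuleCat.of R M) (h M hfin hsgp)
  · intro h M _ _ hfin hsgp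
    obtain ⟨⟨P, i, p, hP, hi, hp, hrk⟩, hext⟩ := hsgp
    haveI := hP
    let S : ShortComplex (ModuleCat.{0} R) :=
      ShortComplex.mk (X₁ := ModuleCat.of R M) (X₂ := P) (X₃ := ModuleCat.of R M)
        (ModuleCat.ofHom i) (ModuleCat.ofHom p) (by
          ext x
          have hx : i x ∈ LinearMap.ker p := by
            rw [← hrk]; exact LinearMap.mem_range_self i x
          exact hx)
    have hS : S.ShortExact :=
      { exact := S.moduleCat_exact_iff_range_eq_ker.mpr hrk
        mono_f := (ModuleCat.mono_iff_injective _).mpr hi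
        epi_g := (ModuleCat.epi_iff_surjective _).mpr hp }
    have hMM : ExtVanish R M M 1 := h M hfin ⟨⟨P, i, p, hP, hi, hp, hrk⟩, hext⟩
    haveI : Subsingleton (Abelian.Ext (ModuleCat.of R M) (ModuleCat.of R M) 1) := hMM
    have hx₃ : (Abelian.Ext.mk₀ (𝟙 (ModuleCat.of R M))).comp hS.extClass rfl = 0 :=
      Subsingleton.elim _ _
    obtain ⟨x₂, hx₂⟩ := Abelian.Ext.covariant_sequence_exact₃ (ModuleCat.of R M) hS
      (Abelian.Ext.mk₀ (𝟙 (ModuleCat.of R M))) rfl hx₃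
    obtain ⟨s, hs⟩ := ext0_lift x₂ S.g (𝟙 (ModuleCat.of R M)) hx₂
    exact Module.Projective.of_split s.hom p (congrArg ModuleCat.Hom.hom hs)
end

section
/- If R is an (n,d)-ring, then every finitely generated strongly Gorenstein projective R-module is projective. -/
open CategoryTheory

section Aux
open LinearMap

variable {R : Type} [CommRing R]

theorem resLen_congr (k : ℕ) : ∀ {A B : Type} [AddCommGroup A] [Module R A]
    [AddCommGroup B] [Module R B] (e : A ≃ₗ[R] B),
    ResLen R (fun P => Module.Projective R P) k (ModuleCat.of R A) →
    ResLen R (fun P => Module.Projective R P) k (ModuleCat.of R B) := by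
  induction k with
  | zero =>
    intro A B _ _ _ _ e h
    have : Module.Projective R A := h
    exact Module.Projective.of_equiv e
  | succ k ih =>
    intro A B _ _ _ _ e h
    obtain ⟨G, g, hG, hgs, hres⟩ := h
    refine ⟨G, e.toLinearMap ∘ₗ g, hG, e.surjective.comp hgs, ?_⟩
    have hk : ker (e.toLinearMap ∘ₗ g) = ker g := by
      rw [ker_comp, LinearEquiv.ker, Submodule.comap_bot]
    rw [hk]
    exact hres

theorem split_equiv {X P : Type} [AddCommGroup X] [Module R X] [AddCommGroup P] [Module R P]
    [Module.Projective R P] (π : X →ₗ[R] P) (hπ : Function.Surjective π) :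
    Nonempty (X ≃ₗ[R] (↥(ker π) × P)) := by
  obtain ⟨s, hs⟩ := Module.projective_lifting_property π LinearMap.id hπ
  have hs' : ∀ y, π (s y) = y := fun y => LinearMap.congr_fun hs y
  have hmem : ∀ x, ((LinearMap.id : X →ₗ[R] X) - s ∘ₗ π) x ∈ ker π := by
    intro x; simp [mem_ker, hs']
  refine ⟨LinearEquiv.ofLinear
    (LinearMap.prod (((LinearMap.id : X →ₗ[R] X) - s ∘ₗ π).codRestrict (ker π) hmem) π)
    ((ker π).subtype ∘ₗ fst R ↥(ker π) P + s ∘ₗ snd R ↥(ker π) P) ?_ ?_⟩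
  · ext <;> simp [hs', LinearMap.map_coe_ker]
  · ext x <;> simp [hs']
end Aux
section Aux2
open LinearMap

variable {R : Type} [CommRing R]

theorem schanuel {M P Q : Type} [AddCommGroup M] [Module R M] [AddCommGroup P] [Module R P]
    [AddCommGroup Q] [Module R Q] [Module.Projective R P] [Module.Projective R Q]
    (f : P →ₗ[R] M) (g : Q →ₗ[R] M) (hf : Function.Surjective f) (hg : Function.Surjective g) :
    Nonempty ((↥(ker f) × Q) ≃ₗ[R] (↥(ker g) × P)) := by
  set h : P × Q →ₗ[R] M := f ∘ₗ fst R P Q - g ∘ₗ snd R P Q with hh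
  let π₁ : ↥(ker h) →ₗ[R] P := (fst R P Q).domRestrict (ker h)
  let π₂ : ↥(ker h) →ₗ[R] Q := (snd R P Q).domRestrict (ker h)
  have hπ₁ : Function.Surjective π₁ := by
    intro p
    obtain ⟨q, hq⟩ := hg (f p)
    exact ⟨⟨(p, q), by simp [hh, mem_ker, hq]⟩, rfl⟩
  have hπ₂ : Function.Surjective π₂ := by
    intro q
    obtain ⟨p, hp⟩ := hf (g q)
    exact ⟨⟨(p, q), by simp [hh, mem_ker, hp]⟩, rfl⟩
  obtain ⟨e₁⟩ := split_equiv π₁ hπ₁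
  obtain ⟨e₂⟩ := split_equiv π₂ hπ₂
  let u₂ : ↥(ker π₂) ≃ₗ[R] ↥(ker f) :=
  { toFun := fun x => ⟨(x.1.1).1, by
      have h1 : (f ∘ₗ fst R P Q - g ∘ₗ snd R P Q) x.1.1 = 0 := x.1.2
      have h2 : ((x.1 : P × Q)).2 = 0 := x.2
      simp only [LinearMap.sub_apply, LinearMap.comp_apply, LinearMap.fst_apply,
        LinearMap.snd_apply, h2, map_zero, sub_zero] at h1
      exact mem_ker.mpr h1⟩
    invFun := fun p => ⟨⟨((p : P), (0 : Q)), by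
        simp [hh, mem_ker]⟩, by
        simp [mem_ker, π₂]⟩
    map_add' := fun a b => rfl
    map_smul' := fun c a => rfl
    left_inv := fun x => Subtype.ext (Subtype.ext (Prod.ext rfl (Eq.symm x.2)))
    right_inv := fun p => rfl }
  let u₁ : ↥(ker π₁) ≃ₗ[R] ↥(ker g) :=
  { toFun := fun x => ⟨(x.1.1).2, by
      have h1 : (f ∘ₗ fst R P Q - g ∘ₗ snd R P Q) x.1.1 = 0 := x.1.2
      have h2 : ((x.1 : P × Q)).1 = 0 := x.2
      simp only [LinearMap.sub_apply, LinearMap.comp_apply, LinearMap.fst_apply,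
        LinearMap.snd_apply, h2, map_zero, zero_sub, neg_eq_zero] at h1
      exact mem_ker.mpr h1⟩
    invFun := fun q => ⟨⟨((0 : P), (q : Q)), by
        simp [hh, mem_ker]⟩, by
        simp [mem_ker, π₁]⟩
    map_add' := fun a b => rfl
    map_smul' := fun c a => rfl
    left_inv := fun x => Subtype.ext (Subtype.ext (Prod.ext (Eq.symm x.2) rfl))
    right_inv := fun q => rfl }
  exact ⟨(u₂.symm.prodCongr (LinearEquiv.refl R Q)).trans
    (e₂.symm.trans (e₁.trans (u₁.prodCongr (LinearEquiv.refl R P))))⟩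
end Aux2
section Aux3
open LinearMap

variable {R : Type} [CommRing R]

theorem resLen_prod (k : ℕ) : ∀ {A B : Type} [AddCommGroup A] [Module R A]
    [AddCommGroup B] [Module R B] (_ : Module.Projective R B),
    ResLen R (fun P => Module.Projective R P) k (ModuleCat.of R A) →
    ResLen R (fun P => Module.Projective R P) k (ModuleCat.of R (A × B)) := by
  induction k with
  | zero =>
    intro A B _ _ _ _ hB h
    have hA : Module.Projective R A := h
    exact (inferInstance : Module.Projective R (A × B))
  | succ k _ =>
    intro A B _ _ _ _ hB h
    obtain ⟨G, g, hG, hgs, hres⟩ := h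
    have hGB : Module.Projective R (↥G × B) := by
      have := hG; exact inferInstance
    refine ⟨ModuleCat.of R (↥G × B), g.prodMap LinearMap.id, hGB,
      hgs.prodMap Function.surjective_id, ?_⟩
    refine resLen_congr k ?_ hres
    refine
    { toFun := fun x => ⟨((x : ↥G), (0 : B)), by
        have h0 : g (x : ↥G) = 0 := map_coe_ker g x
        exact mem_ker.mpr (Prod.ext h0 rfl)⟩
      invFun := fun y => ⟨(y.1 : ↥G × B).1, by
        have hy : (g.prodMap LinearMap.id) (y.1 : ↥G × B) = 0 := y.2
        have h1 : g (y.1 : ↥G × B).1 = 0 := congrArg Prod.fst hy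
        exact mem_ker.mpr h1⟩
      map_add' := fun a b => Subtype.ext (Prod.ext rfl (zero_add 0).symm)
      map_smul' := fun c a => Subtype.ext (Prod.ext rfl (smul_zero c).symm)
      left_inv := fun x => rfl
      right_inv := fun y => by
        have hy : (g.prodMap LinearMap.id) (y.1 : ↥G × B) = 0 := y.2
        have h2 : (y.1 : ↥G × B).2 = 0 := congrArg Prod.snd hy
        exact Subtype.ext (Prod.ext rfl h2.symm) }

theorem key (k : ℕ) : ∀ (M : Type) [AddCommGroup M] [Module R M],
    (∃ (P : ModuleCat.{0} R) (i : M →ₗ[R] P) (p : P →ₗ[R] M),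
      Module.Projective R P ∧ Function.Injective i ∧ Function.Surjective p ∧
      LinearMap.range i = LinearMap.ker p) →
    ResLen R (fun P => Module.Projective R P) k (ModuleCat.of R M) →
    Module.Projective R M := by
  induction k with
  | zero => intro M _ _ _ h; exact h
  | succ k ih =>
    intro M _ _ hper hres
    obtain ⟨P, i, p, hP, hi, hp, hip⟩ := hper
    obtain ⟨G, g, hG, hgs, hresk⟩ := hres
    haveI := hP; haveI := hG
    obtain ⟨e⟩ := schanuel p g hp hgs
    have eM : M ≃ₗ[R] ↥(ker p) :=
      (LinearEquiv.ofInjective i hi).trans (LinearEquiv.ofEq _ _ hip)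
    have hres2 : ResLen R (fun P => Module.Projective R P) k
        (ModuleCat.of R (M × ↥G)) :=
      resLen_congr k (e.symm.trans (eM.symm.prodCongr (LinearEquiv.refl R ↥G)))
        (resLen_prod k hP hresk)
    have hper2 : ∃ (P' : ModuleCat.{0} R) (i' : (M × ↥G) →ₗ[R] P')
        (p' : P' →ₗ[R] (M × ↥G)),
        Module.Projective R P' ∧ Function.Injective i' ∧ Function.Surjective p' ∧
        LinearMap.range i' = LinearMap.ker p' := by
      have hprojP' : Module.Projective R (↥P × (↥G × ↥G)) := inferInstance
      refine ⟨ModuleCat.of R (↥P × (↥G × ↥G)),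
        (i ∘ₗ fst R M ↥G).prod ((snd R M ↥G).prod (0 : (M × ↥G) →ₗ[R] ↥G)),
        (p ∘ₗ fst R ↥P (↥G × ↥G)).prod ((snd R ↥G ↥G) ∘ₗ (snd R ↥P (↥G × ↥G))),
        hprojP', ?_, ?_, ?_⟩
      · intro a b hab
        have h1 : i a.1 = i b.1 := congrArg Prod.fst hab
        have h2 : a.2 = b.2 := congrArg (fun z => z.2.1) hab
        exact Prod.ext (hi h1) h2
      · rintro ⟨m, x⟩
        obtain ⟨y, hy⟩ := hp m
        exact ⟨(y, (0, x)), Prod.ext hy rfl⟩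
      · apply le_antisymm
        · rintro w ⟨a, rfl⟩
          have h0 : p (i a.1) = 0 := by
            have : i a.1 ∈ ker p := hip ▸ mem_range_self i a.1
            exact this
          exact mem_ker.mpr (Prod.ext h0 rfl)
        · rintro ⟨y, x, z⟩ hw
          have hw' : (p y, z) = 0 := hw
          have h1 : p y = 0 := congrArg Prod.fst hw'
          have h2 : z = 0 := congrArg Prod.snd hw'
          have : y ∈ LinearMap.range i := hip.symm ▸ mem_ker.mpr h1
          obtain ⟨m, hm⟩ := this
          exact ⟨(m, x), Prod.ext hm (Prod.ext rfl h2.symm)⟩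
    haveI hbig : Module.Projective R (M × ↥G) := ih (M × ↥G) hper2 hres2
    exact Module.Projective.of_split (LinearMap.inl R M ↥G) (LinearMap.fst R M ↥G)
      (by ext x; rfl)
end Aux3
section Aux4
open LinearMap

variable {R : Type} [CommRing R]

theorem npres_of_sgp {M : Type} [AddCommGroup M] [Module R M] [Module.Finite R M]
    (P : ModuleCat.{0} R) (i : M →ₗ[R] P) (p : P →ₗ[R] M)
    (hP : Module.Projective R P) (hi : Function.Injective i) (hp : Function.Surjective p)
    (hip : LinearMap.range i = LinearMap.ker p) :
    ∀ n, NPres R n (ModuleCat.of R M) := by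
  haveI := hP
  haveI hPfin : Module.Finite R ↥P := by
    rw [Module.finite_def]
    apply Submodule.fg_of_fg_map_of_fg_inf_ker p
    · rw [Submodule.map_top, range_eq_top.mpr hp]
      exact Module.finite_def.mp inferInstance
    · rw [top_inf_eq, ← hip, range_eq_map]
      exact Submodule.FG.map i (Module.finite_def.mp inferInstance)
  obtain ⟨m, π, hπ⟩ := Module.Finite.exists_fin' R ↥P
  obtain ⟨s, hs⟩ := Module.projective_lifting_property π LinearMap.id hπ
  have hs' : ∀ y, π (s y) = y := fun y => LinearMap.congr_fun hs y
  let g : (Fin m → R) →ₗ[R] M := p ∘ₗ π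
  have hgs : Function.Surjective g := hp.comp hπ
  have pi0 : ∀ a, p (i a) = 0 := fun a => by
    have : i a ∈ ker p := hip ▸ mem_range_self i a
    exact this
  let f : (Fin m → R) →ₗ[R] (Fin m → R) :=
    (s ∘ₗ i) ∘ₗ g + ((LinearMap.id : (Fin m → R) →ₗ[R] (Fin m → R)) - s ∘ₗ π)
  let h : (Fin m → R) →ₗ[R] (Fin m → R) := (s ∘ₗ i) ∘ₗ g
  have hf : ∀ x, f x = s (i (p (π x))) + (x - s (π x)) := fun _ => rfl
  have hh : ∀ x, h x = s (i (p (π x))) := fun _ => rfl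
  have hgapp : ∀ x, g x = p (π x) := fun _ => rfl
  -- (a1)
  have hgf : ∀ x, g (f x) = 0 := by
    intro x
    rw [hgapp, hf]
    simp [hs', pi0]
  -- (a2)
  have ha2 : ∀ x, g x = 0 → ∃ y, f y = x := by
    intro x hx
    have hxk : π x ∈ LinearMap.range i := by
      rw [hip]; exact mem_ker.mpr hx
    obtain ⟨a, ha⟩ := hxk
    obtain ⟨z, hz⟩ := hp a
    refine ⟨s z + (x - s (π x)), ?_⟩
    have hπy : π (s z + (x - s (π x))) = z := by simp [map_add, map_sub, hs']
    rw [hf, hπy, hz, ha]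
    abel
  -- (b1)
  have hhf : ∀ x, f (h x) = 0 := by
    intro x
    rw [hf, hh]
    simp [hs', pi0]
  -- (b2)
  have hb2 : ∀ x, f x = 0 → ∃ y, h y = x := by
    intro x hx
    have h5 : i (p (π x)) = 0 := by
      have := congrArg π hx
      rw [hf, map_add, map_sub, hs', hs', map_zero] at this
      simpa using this
    have hgx : p (π x) = 0 := hi (h5.trans (map_zero i).symm)
    have hxs : x = s (π x) := by
      have hfx := hx
      rw [hf, hgx] at hfx
      simp only [map_zero, zero_add, sub_eq_zero] at hfx
      exact hfx
    have hxr : π x ∈ LinearMap.range i := by rw [hip]; exact mem_ker.mpr hgx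
    obtain ⟨a, ha⟩ := hxr
    obtain ⟨y, hy⟩ := hgs a
    have hy' : p (π y) = a := hy
    refine ⟨y, ?_⟩
    rw [hh, hy', ha]
    exact hxs.symm
  -- (c)
  have hc : ker h = ker g := by
    ext x
    simp only [mem_ker]
    constructor
    · intro hx0
      rw [hh] at hx0
      have := congrArg π hx0
      rw [hs', map_zero] at this
      exact hi (this.trans (map_zero i).symm)
    · intro h0
      rw [hh]
      have h0' : p (π x) = 0 := h0
      simp [h0']
  -- corestrictions
  let fK : (Fin m → R) →ₗ[R] ↥(ker g) := f.codRestrict (ker g) (fun x => mem_ker.mpr (hgf x))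
  have hfKs : Function.Surjective fK := by
    rintro ⟨x, hx⟩
    obtain ⟨y, hy⟩ := ha2 x (mem_ker.mp hx)
    exact ⟨y, Subtype.ext hy⟩
  let hK : (Fin m → R) →ₗ[R] ↥(ker f) := h.codRestrict (ker f) (fun x => mem_ker.mpr (hhf x))
  have hhKs : Function.Surjective hK := by
    rintro ⟨x, hx⟩
    obtain ⟨y, hy⟩ := hb2 x (mem_ker.mp hx)
    exact ⟨y, Subtype.ext hy⟩
  have hfree : Module.Free R ↥(ModuleCat.of R (Fin m → R)) := inferInstanceAs (Module.Free R (Fin m → R))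
  have hfin : Module.Finite R ↥(ModuleCat.of R (Fin m → R)) := inferInstanceAs (Module.Finite R (Fin m → R))
  have main : ∀ k, NPres R k (ModuleCat.of R ↥(ker g)) ∧ NPres R k (ModuleCat.of R ↥(ker f)) := by
    intro k
    induction k with
    | zero =>
      exact ⟨⟨ModuleCat.of R (Fin m → R), fK, hfree, hfin, hfKs⟩,
        ⟨ModuleCat.of R (Fin m → R), hK, hfree, hfin, hhKs⟩⟩
    | succ k ihk =>
      constructor
      · refine ⟨ModuleCat.of R (Fin m → R), fK, hfree, hfin, hfKs, ?_⟩
        have hk : ker fK = ker f := ker_codRestrict _ _ _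
        rw [hk]
        exact ihk.2
      · refine ⟨ModuleCat.of R (Fin m → R), hK, hfree, hfin, hhKs, ?_⟩
        have hk : ker hK = ker g := (ker_codRestrict _ _ _).trans hc
        rw [hk]
        exact ihk.1
  intro n
  cases n with
  | zero => exact ⟨ModuleCat.of R (Fin m → R), g, hfree, hfin, hgs⟩
  | succ k => exact ⟨ModuleCat.of R (Fin m → R), g, hfree, hfin, hgs, (main k).1⟩
end Aux4
/-- if `R` is an `(n,d)`-ring (every module admitting a finite
`n`-presentation has projective dimension at most `d`), then every finitely generated
strongly Gorenstein projective `R`-module is projective. -/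
theorem stmt14 (R : Type) [CommRing R] (n d : ℕ)
    (hnd : ∀ (M : Type) [AddCommGroup M] [Module R M],
        NPres R n (ModuleCat.of R M) → pdim R M ≤ (d : ℕ∞)) :
    ∀ (M : Type) [AddCommGroup M] [Module R M],
        Module.Finite R M → IsSGP R M → Module.Projective R M := by

  intro M _ _ hfin hsgp
  obtain ⟨⟨P, i, p, hP, hi, hp, hip⟩, -⟩ := hsgp
  haveI := hfin
  have hnpres : NPres R n (ModuleCat.of R M) := npres_of_sgp P i p hP hi hp hip n
  have hpd := hnd M hnpres
  have hne : ∃ k : ℕ,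
      ResLen R (fun P => Module.Projective R P) k (ModuleCat.of R M) := by
    by_contra hc
    push_neg at hc
    have hempty : {c : ℕ∞ | ∃ k : ℕ, c = k ∧
        ResLen R (fun P => Module.Projective R P) k (ModuleCat.of R M)} = ∅ := by
      ext c
      simp only [Set.mem_setOf_eq, Set.mem_empty_iff_false, iff_false]
      rintro ⟨k, -, hres⟩
      exact hc k hres
    unfold pdim at hpd
    rw [hempty, sInf_empty] at hpd
    exact (ENat.coe_lt_top d).not_ge hpd
  obtain ⟨k, hres⟩ := hne
  exact key k M ⟨P, i, p, hP, hi, hp, hip⟩ hres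
end
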